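/- Consider binary values with validity defined recursively: every value is valid at round 0; v is valid at round 1 iff at least t+1 distinct processes sent v at round 0; for r ≥ 2, letting b = (r-1) mod 2: if v = b then v is valid at round r iff (r = 2 and t+1 distinct processes sent v at round 0) or (n - t distinct processes sent v at round r-2); if v ≠ b then v is valid at round r iff n - t distinct processes sent v at round r-1. If every non-faulty process sends a valid value in every round r ≥ 1 and all non-faulty processes (at least n - t of them, with n > 3t) participate in every round, then for every round r ≥ 1 at least one binary value is valid at round r. -/
import Mathlib


/-- Lemma 4 (lem:enough): in every round r ≥ 1 at least one binary value is valid. -/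
theorem some_value_valid {α : Type*} [DecidableEq α] (P F : Finset α) (n t : ℕ)
    (sent : ℕ → α → Bool → Prop) (valid : ℕ → Bool → Prop)
    (hn : P.card = n) (ht : 3 * t < n)
    (hF : F ⊆ P) (hFcard : F.card ≤ t)
    -- every value is valid at round 0
    (h0 : ∀ v : Bool, valid 0 v)
    -- v is valid at round 1 iff t+1 distinct processes sent v at round 0
    (h1 : ∀ v : Bool, valid 1 v ↔ ∃ T ⊆ P, t + 1 ≤ T.card ∧ ∀ p ∈ T, sent 0 p v)
    -- for r ≥ 2, with b = (r-1) mod 2: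
    (hr : ∀ r : ℕ, 2 ≤ r → ∀ v : Bool,
      (v = decide ((r - 1) % 2 = 1) →
        (valid r v ↔ ((r = 2 ∧ ∃ T ⊆ P, t + 1 ≤ T.card ∧ ∀ p ∈ T, sent 0 p v) ∨
          (∃ S ⊆ P, n - t ≤ S.card ∧ ∀ p ∈ S, sent (r - 2) p v)))) ∧
      (v ≠ decide ((r - 1) % 2 = 1) →
        (valid r v ↔ ∃ S ⊆ P, n - t ≤ S.card ∧ ∀ p ∈ S, sent (r - 1) p v)))
    -- every non-faulty process sends a valid value in every round r ≥ 1 (including round 0)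
    (hsend : ∀ r : ℕ, ∀ p ∈ P, p ∉ F → ∃ v : Bool, sent r p v ∧ valid r v)
    -- all non-faulty processes participate: there are at least n - t of them
    (hpart : n - t ≤ (P \ F).card) :
    ∀ r : ℕ, 1 ≤ r → ∃ v : Bool, valid r v := by
  classical
  intro r hr1
  rcases Nat.eq_or_lt_of_le hr1 with h1' | h2'
  · -- r = 1 : pigeonhole on round-0 sends of non-faulty processes
    subst h1'
    set Tt := (P \ F).filter (fun p => sent 0 p true) with hTt
    set Tf := (P \ F).filter (fun p => sent 0 p false) with hTf
    have hsub : P \ F ⊆ Tt ∪ Tf := by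
      intro p hp
      obtain ⟨v, hs, _⟩ := hsend 0 p (Finset.mem_sdiff.mp hp).1 (Finset.mem_sdiff.mp hp).2
      cases v <;> simp [hTt, hTf, Finset.mem_union, Finset.mem_filter, hp, hs]
    have hcard : n - t ≤ Tt.card + Tf.card :=
      le_trans hpart (le_trans (Finset.card_le_card hsub) (Finset.card_union_le _ _))
    have hcase : t + 1 ≤ Tt.card ∨ t + 1 ≤ Tf.card := by omega
    rcases hcase with h | h
    · exact ⟨true, (h1 true).mpr ⟨Tt, (Finset.filter_subset _ _).trans Finset.sdiff_subset,
        h, fun p hp => (Finset.mem_filter.mp hp).2⟩⟩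
    · exact ⟨false, (h1 false).mpr ⟨Tf, (Finset.filter_subset _ _).trans Finset.sdiff_subset,
        h, fun p hp => (Finset.mem_filter.mp hp).2⟩⟩
  · -- r ≥ 2
    have hr2 : 2 ≤ r := h2'
    set b := decide ((r - 1) % 2 = 1) with hb
    by_cases hc : valid (r - 1) b
    · -- b itself is valid at round r
      refine ⟨b, ((hr r hr2 b).1 rfl).mpr ?_⟩
      rcases Nat.eq_or_lt_of_le hr2 with he | h3
      · -- r = 2
        cases he
        exact Or.inl ⟨rfl, (h1 b).mp hc⟩
      · -- r ≥ 3
        right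
        have h2r1 : 2 ≤ r - 1 := by omega
        have hne : b ≠ decide ((r - 1 - 1) % 2 = 1) := by
          simp only [hb, ne_eq, decide_eq_decide]
          omega
        have hv := ((hr (r - 1) h2r1 b).2 hne).mp hc
        simpa [show r - 1 - 1 = r - 2 from by omega] using hv
    · -- every non-faulty process sends !b at round r-1
      refine ⟨!b, ((hr r hr2 (!b)).2 (by simp [hb])).mpr
        ⟨P \ F, Finset.sdiff_subset, hpart, ?_⟩⟩
      intro p hp
      obtain ⟨v, hs, hv⟩ := hsend (r - 1) p (Finset.mem_sdiff.mp hp).1 (Finset.mem_sdiff.mp hp).2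
      have hvb : v ≠ b := fun h => hc (h ▸ hv)
      have hvb' : v = !b := Bool.eq_not_of_ne hvb
      rwa [hvb'] at hs
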